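/- Let L ≥ 1 and let p ∈ ℝ^L with p(j) > 0 for all j and Σ_{j=1}^L p(j) = 1. If ρ : ℝ^L → ℝ satisfies (A1) convexity: ρ(λZ + (1−λ)W) ≤ λρ(Z) + (1−λ)ρ(W) for all λ ∈ [0,1] and Z, W ∈ ℝ^L; (A2) monotonicity: Z ≤ W componentwise implies ρ(Z) ≤ ρ(W); (A3) translation invariance: ρ(Z + a·𝟙) = ρ(Z) + a for all a ∈ ℝ; and (A4) positive homogeneity: ρ(λZ) = λρ(Z) for all λ ≥ 0; then there exists a nonempty compact convex set U ⊆ Δ^L such that ρ(Z) = max_{q ∈ U} Σ_{j=1}^L q(j) Z(j) for every Z ∈ ℝ^L. -/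

import Mathlib

/-- Representation theorem for coherent risk measures on finite probability spaces. -/
theorem stmt_0 (L : ℕ) (hL : 1 ≤ L) (p : Fin L → ℝ)
    (hp_pos : ∀ j, 0 < p j) (hp_sum : ∑ j, p j = 1)
    (ρ : (Fin L → ℝ) → ℝ)
    (hA1 : ∀ (lam : ℝ) (Z W : Fin L → ℝ), 0 ≤ lam → lam ≤ 1 →
      ρ (lam • Z + (1 - lam) • W) ≤ lam * ρ Z + (1 - lam) * ρ W)
    (hA2 : ∀ Z W : Fin L → ℝ, (∀ j, Z j ≤ W j) → ρ Z ≤ ρ W)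
    (hA3 : ∀ (a : ℝ) (Z : Fin L → ℝ), ρ (fun j => Z j + a) = ρ Z + a)
    (hA4 : ∀ (lam : ℝ) (Z : Fin L → ℝ), 0 ≤ lam → ρ (lam • Z) = lam * ρ Z) :
    ∃ U : Set (Fin L → ℝ), U.Nonempty ∧ IsCompact U ∧ Convex ℝ U ∧
      U ⊆ stdSimplex ℝ (Fin L) ∧
      ∀ Z : Fin L → ℝ, IsGreatest ((fun q => ∑ j, q j * Z j) '' U) (ρ Z) := by
  have hρ0 : ρ 0 = 0 := by
    have := hA4 0 0 le_rfl
    simpa using this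
  -- subadditivity
  have hsub : ∀ X Y : Fin L → ℝ, ρ (X + Y) ≤ ρ X + ρ Y := by
    intro X Y
    have h1 : ρ ((1/2 : ℝ) • X + (1 - 1/2 : ℝ) • Y)
        ≤ (1/2 : ℝ) * ρ X + (1 - 1/2 : ℝ) * ρ Y := hA1 (1/2) X Y (by norm_num) (by norm_num)
    have h2 : X + Y = (2 : ℝ) • ((1/2 : ℝ) • X + (1 - 1/2 : ℝ) • Y) := by
      rw [smul_add, smul_smul, smul_smul]; norm_num
    calc ρ (X + Y) = 2 * ρ ((1/2 : ℝ) • X + (1 - 1/2 : ℝ) • Y) := by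
          rw [h2, hA4 2 _ (by norm_num)]
      _ ≤ 2 * ((1/2 : ℝ) * ρ X + (1 - 1/2 : ℝ) * ρ Y) := by linarith
      _ = ρ X + ρ Y := by ring
  -- positive homogeneity for positive c (needed for Hahn-Banach)
  have hhom : ∀ c : ℝ, 0 < c → ∀ x, ρ (c • x) = c * ρ x := fun c hc x => hA4 c x hc.le
  set U : Set (Fin L → ℝ) :=
    {q | q ∈ stdSimplex ℝ (Fin L) ∧ ∀ Z : Fin L → ℝ, ∑ j, q j * Z j ≤ ρ Z} with hU
  -- key: for any Z₀ there is a maximizer in U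
  have key : ∀ Z₀ : Fin L → ℝ, Z₀ ≠ 0 → ∃ q ∈ U, ∑ j, q j * Z₀ j = ρ Z₀ := by
    intro Z₀ hZ₀
    -- partial linear map on span of Z₀
    set f : (Fin L → ℝ) →ₗ.[ℝ] ℝ := LinearPMap.mkSpanSingleton Z₀ (ρ Z₀) hZ₀ with hf
    have hfle : ∀ x : f.domain, f x ≤ ρ x := by
      rintro ⟨x, hx⟩
      have hx' : x ∈ Submodule.span ℝ {Z₀} := hx
      rcases Submodule.mem_span_singleton.1 hx' with ⟨c, rfl⟩
      have happ : f ⟨c • Z₀, hx⟩ = c • ρ Z₀ :=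
        LinearPMap.mkSpanSingleton'_apply Z₀ (ρ Z₀) _ c _
      rw [happ]
      rcases le_or_gt 0 c with hc | hc
      · rw [hA4 c Z₀ hc]; simp [smul_eq_mul]
      · -- c < 0 : c * ρ Z₀ ≤ ρ (c • Z₀)
        have h0 : (0 : ℝ) = ρ (c • Z₀ + (-c) • Z₀) := by
          rw [← hρ0]; congr 1; rw [← add_smul]; simp
        have := hsub (c • Z₀) ((-c) • Z₀)
        rw [hA4 (-c) Z₀ (by linarith)] at this
        rw [← h0] at this
        simp only [smul_eq_mul]
        linarith
    obtain ⟨g, hg_ext, hg_le⟩ :=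
      exists_extension_of_le_sublinear f ρ hhom hsub hfle
    have hgZ₀ : g Z₀ = ρ Z₀ := by
      have hmem : Z₀ ∈ f.domain := by
        rw [hf]; exact Submodule.mem_span_singleton_self Z₀
      have := hg_ext ⟨Z₀, hmem⟩
      rw [this]
      exact LinearPMap.mkSpanSingleton'_apply_self _ _ _ _
    set q : Fin L → ℝ := fun j => g (fun k => if j = k then 1 else 0) with hq
    have hrepr : ∀ Z : Fin L → ℝ, g Z = ∑ j, q j * Z j := by
      intro Z
      rw [LinearMap.pi_apply_eq_sum_univ g Z]
      exact Finset.sum_congr rfl fun j _ => by rw [smul_eq_mul, mul_comm]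
    have hq_nonneg : ∀ j, 0 ≤ q j := by
      intro j
      have hneg : g (-(fun k => if j = k then 1 else 0) : Fin L → ℝ) ≤
          ρ (-(fun k => if j = k then 1 else 0) : Fin L → ℝ) := hg_le _
      have hρneg : ρ (-(fun k => if j = k then 1 else 0) : Fin L → ℝ) ≤ 0 := by
        have h := hA2 (-(fun k => if j = k then 1 else 0) : Fin L → ℝ) 0
          (fun k => by by_cases h : j = k <;> simp [h])
        simpa [hρ0] using h
      rw [map_neg] at hneg
      have : -q j ≤ 0 := le_trans hneg hρneg
      linarith
    have hρ_one : ρ (fun _ => (1 : ℝ)) = 1 := by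
      have := hA3 1 0
      simpa [hρ0] using this
    have hρ_negone : ρ (-(fun _ => (1 : ℝ)) : Fin L → ℝ) = -1 := by
      have h := hA3 (-1) 0
      have he : (fun j => (0 : Fin L → ℝ) j + (-1)) = (-(fun _ => (1 : ℝ)) : Fin L → ℝ) := by
        funext k; simp
      rw [he] at h
      simpa [hρ0] using h
    have hq_sum : ∑ j, q j = 1 := by
      have h1 : g (fun _ => (1 : ℝ)) = ∑ j, q j := by
        rw [hrepr]; simp
      have h2 : g (fun _ => (1 : ℝ)) ≤ 1 := by
        have := hg_le (fun _ => (1 : ℝ)); rwa [hρ_one] at this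
      have h3 : -g (fun _ => (1 : ℝ)) ≤ -1 := by
        have hle := hg_le (-(fun _ => (1 : ℝ)) : Fin L → ℝ)
        rwa [map_neg, hρ_negone] at hle
      linarith [h1 ▸ h2, h1 ▸ h3]
    refine ⟨q, ⟨⟨hq_nonneg, hq_sum⟩, fun Z => ?_⟩, ?_⟩
    · rw [← hrepr]; exact hg_le Z
    · rw [← hrepr]; exact hgZ₀
  have hone_ne : (fun _ => (1 : ℝ) : Fin L → ℝ) ≠ 0 := by
    intro h
    have := congrFun h ⟨0, hL⟩
    norm_num at this
  obtain ⟨q₁, hq₁U, _⟩ := key (fun _ => (1 : ℝ)) hone_ne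
  -- U properties
  have hUsub : U ⊆ stdSimplex ℝ (Fin L) := fun q hq => hq.1
  have hUconv : Convex ℝ U := by
    intro x hx y hy a b ha hb hab
    refine ⟨(convex_stdSimplex ℝ (Fin L)) hx.1 hy.1 ha hb hab, fun Z => ?_⟩
    have hx2 := hx.2 Z
    have hy2 := hy.2 Z
    have : ∑ j, (a • x + b • y) j * Z j
        = a * ∑ j, x j * Z j + b * ∑ j, y j * Z j := by
      rw [Finset.mul_sum, Finset.mul_sum, ← Finset.sum_add_distrib]
      exact Finset.sum_congr rfl fun j _ => by
        simp [Pi.add_apply, Pi.smul_apply, smul_eq_mul]; ring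
    rw [this]
    calc a * ∑ j, x j * Z j + b * ∑ j, y j * Z j
        ≤ a * ρ Z + b * ρ Z :=
          add_le_add (mul_le_mul_of_nonneg_left hx2 ha) (mul_le_mul_of_nonneg_left hy2 hb)
      _ = ρ Z := by rw [← add_mul, hab, one_mul]
  have hUclosed : IsClosed U := by
    have : U = stdSimplex ℝ (Fin L) ∩ ⋂ Z : Fin L → ℝ, {q | ∑ j, q j * Z j ≤ ρ Z} := by
      ext q; simp [hU, Set.mem_iInter]
    rw [this]
    refine (isClosed_stdSimplex ℝ _).inter (isClosed_iInter fun Z => ?_)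
    exact isClosed_le (by continuity) continuous_const
  have hUcomp : IsCompact U :=
    (isCompact_stdSimplex ℝ (Fin L)).of_isClosed_subset hUclosed hUsub
  refine ⟨U, ⟨q₁, hq₁U⟩, hUcomp, hUconv, hUsub, fun Z => ?_⟩
  constructor
  · -- ρ Z is attained
    by_cases hZ : Z = 0
    · refine ⟨q₁, hq₁U, ?_⟩
      subst hZ; simp [hρ0]
    · obtain ⟨q, hqU, hqZ⟩ := key Z hZ
      exact ⟨q, hqU, hqZ⟩
  · rintro x ⟨q, hqU, rfl⟩
    exact hqU.2 Z
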